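/- arXiv:2105.04851 — 4 statements merged into one kernel-verified Lean document; each statement's English description precedes it below -/
import Mathlib

section
/- For all natural numbers $a, k$ with $1 < a < k$ and all real $\gamma$ with $1 < \gamma < a/2$, the product $\prod_{t=a}^{k-1}(1 - \gamma/t)$ satisfies $a^{2\gamma}/k^{2\gamma} \le \prod_{t=a}^{k-1}(1-\gamma/t) \le a^{\gamma}/k^{\gamma}$. -/
open Finset

lemma tele_prod (a : ℕ) (ha : 0 < a) : ∀ k, a ≤ k →
    ∏ t ∈ Finset.Ico a k, ((t : ℝ) / (t + 1)) = (a : ℝ) / k := by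
  intro k hk
  induction k, hk using Nat.le_induction with
  | base => simp; field_simp
  | succ k hk ih =>
      rw [Finset.prod_Ico_succ_top hk, ih]
      have hk0 : (0:ℝ) < k := by exact_mod_cast lt_of_lt_of_le ha hk
      push_cast
      field_simp

/-- For naturals `1 < a < k` and real `1 < γ < a/2`,
`a^(2γ)/k^(2γ) ≤ ∏_{t=a}^{k-1} (1 - γ/t) ≤ a^γ/k^γ`. -/
theorem stmt_1 (a k : ℕ) (γ : ℝ) (ha : 1 < a) (hak : a < k)
    (hγ1 : 1 < γ) (hγ2 : γ < (a : ℝ) / 2) :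
    (a : ℝ) ^ (2 * γ) / (k : ℝ) ^ (2 * γ) ≤ (∏ t ∈ Finset.Ico a k, (1 - γ / (t : ℝ))) ∧
    (∏ t ∈ Finset.Ico a k, (1 - γ / (t : ℝ))) ≤ (a : ℝ) ^ γ / (k : ℝ) ^ γ := by
  have ha0 : (0:ℝ) < a := by positivity
  have hk0 : (0:ℝ) < k := by exact_mod_cast (by omega : 0 < k)
  -- facts for each t in Ico a k
  have hmem : ∀ t ∈ Finset.Ico a k, (a : ℝ) ≤ t ∧ (0:ℝ) < t ∧ 2 * γ < t := by
    intro t ht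
    have h1 : a ≤ t := (Finset.mem_Ico.mp ht).1
    have h1' : (a:ℝ) ≤ t := by exact_mod_cast h1
    refine ⟨h1', lt_of_lt_of_le ha0 h1', by linarith⟩
  have hpos : ∀ t ∈ Finset.Ico a k, (0:ℝ) < 1 - γ / t := by
    intro t ht
    obtain ⟨h1, h2, h3⟩ := hmem t ht
    rw [sub_pos, div_lt_one h2]; linarith
  -- pointwise upper bound
  have hub : ∀ t ∈ Finset.Ico a k, 1 - γ / t ≤ ((t:ℝ) / (t + 1)) ^ γ := by
    intro t ht
    obtain ⟨h1, h2, h3⟩ := hmem t ht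
    set x : ℝ := (t : ℝ)
    have hx1 : (0:ℝ) < x + 1 := by linarith
    have hd : 1 / (x + 1) ≤ 1 := by rw [div_le_one hx1]; linarith
    have hb : 1 + γ * (-(1 / (x + 1))) ≤ (1 + (-(1 / (x + 1)))) ^ γ :=
      one_add_mul_self_le_rpow_one_add (by linarith) hγ1.le
    have he : 1 + (-(1 / (x + 1))) = x / (x + 1) := by field_simp; ring
    rw [he] at hb
    calc 1 - γ / x ≤ 1 + γ * (-(1 / (x + 1))) := by
          have : γ / (x+1) ≤ γ / x := by
            apply div_le_div_of_nonneg_left (by linarith) h2 (by linarith)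
          ring_nf
          ring_nf at this
          linarith
      _ ≤ (x / (x + 1)) ^ γ := hb
  -- pointwise lower bound
  have hlb : ∀ t ∈ Finset.Ico a k, ((t:ℝ) / (t + 1)) ^ (2 * γ) ≤ 1 - γ / t := by
    intro t ht
    obtain ⟨h1, h2, h3⟩ := hmem t ht
    set x : ℝ := (t : ℝ)
    have hx1 : (0:ℝ) < x + 1 := by linarith
    have hd : (0:ℝ) ≤ 1 / x := by positivity
    have hb : 1 + (2 * γ) * (1 / x) ≤ (1 + 1 / x) ^ (2 * γ) :=
      one_add_mul_self_le_rpow_one_add (by linarith) (by linarith)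
    have hBpos : (0:ℝ) < 1 + (2 * γ) * (1 / x) := by positivity
    have hmul : ((x / (x + 1)) ^ (2*γ)) * ((1 + 1 / x) ^ (2*γ)) = 1 := by
      rw [← Real.mul_rpow (by positivity) (by positivity)]
      have : x / (x + 1) * (1 + 1 / x) = 1 := by field_simp
      rw [this, Real.one_rpow]
    have hApos : (0:ℝ) < (1 + 1 / x) ^ (2*γ) := Real.rpow_pos_of_pos (by positivity) _
    have heq : (x / (x + 1)) ^ (2*γ) = ((1 + 1 / x) ^ (2*γ))⁻¹ :=
      eq_inv_of_mul_eq_one_right (by rw [mul_comm]; exact hmul)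
    rw [heq]
    have step1 : ((1 + 1 / x) ^ (2*γ))⁻¹ ≤ (1 + (2*γ) * (1/x))⁻¹ :=
      inv_anti₀ hBpos hb
    refine step1.trans ?_
    rw [inv_le_iff_one_le_mul₀ hBpos]
    have key : (1 - γ / x) * (1 + 2 * γ * (1 / x)) = 1 + (γ * x - 2 * γ ^ 2) / x ^ 2 := by
      field_simp; ring
    have h4 : (0:ℝ) ≤ (γ * x - 2 * γ ^ 2) / x ^ 2 :=
      div_nonneg (by nlinarith) (sq_nonneg x)
    rw [key]; linarith
  have hprodpos : ∀ t ∈ Finset.Ico a k, (0:ℝ) ≤ (t:ℝ) / (t + 1) := by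
    intro t ht; positivity
  have tele : ∏ t ∈ Finset.Ico a k, ((t : ℝ) / (t + 1)) = (a : ℝ) / k :=
    tele_prod a (by omega) k hak.le
  constructor
  · calc (a : ℝ) ^ (2*γ) / (k : ℝ) ^ (2*γ) = ((a:ℝ)/k) ^ (2*γ) := by
          rw [Real.div_rpow ha0.le hk0.le]
      _ = (∏ t ∈ Finset.Ico a k, ((t : ℝ) / (t + 1))) ^ (2*γ) := by rw [tele]
      _ = ∏ t ∈ Finset.Ico a k, ((t : ℝ) / (t + 1)) ^ (2*γ) :=
          (Real.finset_prod_rpow _ _ hprodpos _).symm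
      _ ≤ ∏ t ∈ Finset.Ico a k, (1 - γ / (t:ℝ)) :=
          Finset.prod_le_prod (fun t ht => Real.rpow_nonneg (hprodpos t ht) _) hlb
  · calc (∏ t ∈ Finset.Ico a k, (1 - γ / (t:ℝ)))
        ≤ ∏ t ∈ Finset.Ico a k, ((t : ℝ) / (t + 1)) ^ γ :=
          Finset.prod_le_prod (fun t ht => (hpos t ht).le) hub
      _ = (∏ t ∈ Finset.Ico a k, ((t : ℝ) / (t + 1))) ^ γ :=
          Real.finset_prod_rpow _ _ hprodpos _
      _ = ((a:ℝ)/k) ^ γ := by rw [tele]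
      _ = (a : ℝ) ^ γ / (k : ℝ) ^ γ := Real.div_rpow ha0.le hk0.le γ
end

section
/- Let $(M_k)_{k\ge 0}$ be a nonnegative real sequence satisfying $M_{k+1} \le \left(1 - \tfrac{c}{k+m}\right) M_k + \tfrac{p_2}{(k+m)^2} + \tfrac{p_3}{(k+m)^3} + \tfrac{p_5}{(k+m)^5}$ for all $k \ge 0$, where $c > 4$, $m > c$, and $p_2, p_3, p_5 \ge 0$. Then for all $k \ge 1$, $M_k \le \frac{m^2 M_0}{(k+m)^2} + \frac{4 p_2}{(c-1)(k+m)} + \frac{4 p_3}{(c-2)(k+m)^2} + \frac{4 p_5}{(c-4)(k+m)^4}$. (This is the key Lyapunov recursion bound with $c = 4\theta/3$.) -/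
lemma step12 (c n A p2 p3 p5 : ℝ) (hc : 4 < c) (hn : c < n)
    (hA : 0 ≤ A) (hp2 : 0 ≤ p2) (hp3 : 0 ≤ p3) (hp5 : 0 ≤ p5) :
    (1 - c/n) * (A/n^2 + 4*p2/((c-1)*n) + 4*p3/((c-2)*n^2) + 4*p5/((c-4)*n^4))
      + p2/n^2 + p3/n^3 + p5/n^5
    ≤ A/(n+1)^2 + 4*p2/((c-1)*(n+1)) + 4*p3/((c-2)*(n+1)^2) + 4*p5/((c-4)*(n+1)^4) := by
  have hn0 : (0:ℝ) < n := by linarith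
  have hc1 : (0:ℝ) < c - 1 := by linarith
  have hc2 : (0:ℝ) < c - 2 := by linarith
  have hc4 : (0:ℝ) < c - 4 := by linarith
  have h1 : (1 - c/n) * (A/n^2) ≤ A/(n+1)^2 := by
    rw [show (1 - c/n) * (A/n^2) = A*(n-c)/n^3 by field_simp,
      div_le_div_iff₀ (by positivity) (by positivity)]
    nlinarith [mul_nonneg hA hn0.le, mul_nonneg (mul_nonneg hA hn0.le) hn0.le]
  have h2 : (1 - c/n) * (4*p2/((c-1)*n)) + p2/n^2 ≤ 4*p2/((c-1)*(n+1)) := by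
    rw [show (1 - c/n) * (4*p2/((c-1)*n)) + p2/n^2 = (4*p2*(n-c)+ (c-1)*p2)/((c-1)*n^2) by
      field_simp, div_le_div_iff₀ (by positivity) (by positivity)]
    nlinarith [mul_nonneg hp2 hn0.le, mul_nonneg (mul_nonneg hp2 hn0.le) hn0.le,
      mul_nonneg hp2 hc1.le, mul_nonneg (mul_nonneg hp2 hn0.le) hc1.le]
  have h3 : (1 - c/n) * (4*p3/((c-2)*n^2)) + p3/n^3 ≤ 4*p3/((c-2)*(n+1)^2) := by
    rw [show (1 - c/n) * (4*p3/((c-2)*n^2)) + p3/n^3 = (4*p3*(n-c)+ (c-2)*p3)/((c-2)*n^3) by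
      field_simp, div_le_div_iff₀ (by positivity) (by positivity)]
    nlinarith [mul_nonneg hp3 hn0.le, mul_nonneg (mul_nonneg hp3 hn0.le) hn0.le,
      mul_nonneg hp3 hc2.le, mul_nonneg (mul_nonneg hp3 hn0.le) hc2.le,
      mul_nonneg (mul_nonneg (mul_nonneg hp3 hn0.le) hn0.le) hn0.le,
      mul_nonneg (mul_nonneg (mul_nonneg hp3 hn0.le) hn0.le) hc2.le]
  have h4 : (1 - c/n) * (4*p5/((c-4)*n^4)) + p5/n^5 ≤ 4*p5/((c-4)*(n+1)^4) := by
    rw [show (1 - c/n) * (4*p5/((c-4)*n^4)) + p5/n^5 = (4*p5*(n-c)+ (c-4)*p5)/((c-4)*n^5) by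
      field_simp, div_le_div_iff₀ (by positivity) (by positivity)]
    nlinarith [mul_nonneg hp5 hn0.le, mul_nonneg (mul_nonneg hp5 hn0.le) hn0.le,
      mul_nonneg hp5 hc4.le, mul_nonneg (mul_nonneg hp5 hn0.le) hc4.le,
      mul_nonneg (mul_nonneg (mul_nonneg hp5 hn0.le) hn0.le) hn0.le,
      mul_nonneg (mul_nonneg (mul_nonneg hp5 hn0.le) hn0.le) hc4.le,
      mul_nonneg (mul_nonneg (mul_nonneg (mul_nonneg hp5 hn0.le) hn0.le) hn0.le) hn0.le,
      mul_nonneg (mul_nonneg (mul_nonneg (mul_nonneg hp5 hn0.le) hn0.le) hn0.le) hc4.le,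
      mul_nonneg (mul_nonneg (mul_nonneg (mul_nonneg (mul_nonneg hp5 hn0.le) hn0.le) hn0.le) hn0.le) hc4.le]
  nlinarith [h1, h2, h3, h4]

/-- the key Lyapunov recursion bound. -/
theorem stmt_12 (M : ℕ → ℝ) (hMnn : ∀ k, 0 ≤ M k)
    (c m p2 p3 p5 : ℝ) (hc : 4 < c) (hm : c < m)
    (hp2 : 0 ≤ p2) (hp3 : 0 ≤ p3) (hp5 : 0 ≤ p5)
    (hrec : ∀ k : ℕ, M (k + 1) ≤ (1 - c / ((k : ℝ) + m)) * M k
      + p2 / ((k : ℝ) + m) ^ 2 + p3 / ((k : ℝ) + m) ^ 3 + p5 / ((k : ℝ) + m) ^ 5) :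
    ∀ k : ℕ, 1 ≤ k →
      M k ≤ m ^ 2 * M 0 / ((k : ℝ) + m) ^ 2
        + 4 * p2 / ((c - 1) * ((k : ℝ) + m))
        + 4 * p3 / ((c - 2) * ((k : ℝ) + m) ^ 2)
        + 4 * p5 / ((c - 4) * ((k : ℝ) + m) ^ 4) := by
  have hm0 : (0:ℝ) < m := by linarith
  have key : ∀ k : ℕ, M k ≤ m ^ 2 * M 0 / ((k : ℝ) + m) ^ 2
        + 4 * p2 / ((c - 1) * ((k : ℝ) + m))
        + 4 * p3 / ((c - 2) * ((k : ℝ) + m) ^ 2)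
        + 4 * p5 / ((c - 4) * ((k : ℝ) + m) ^ 4) := by
    intro k
    induction k with
    | zero =>
      simp only [Nat.cast_zero, zero_add]
      have : m ^ 2 * M 0 / m ^ 2 = M 0 := by
        field_simp
      rw [this]
      have hc1 : (0:ℝ) < c - 1 := by linarith
      have hc2 : (0:ℝ) < c - 2 := by linarith
      have hc4 : (0:ℝ) < c - 4 := by linarith
      have t2 : 0 ≤ 4 * p2 / ((c - 1) * m) := by positivity
      have t3 : 0 ≤ 4 * p3 / ((c - 2) * m ^ 2) := by positivity
      have t5 : 0 ≤ 4 * p5 / ((c - 4) * m ^ 4) := by positivity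
      linarith
    | succ k ih =>
      set n : ℝ := (k : ℝ) + m with hn
      have hcn : c < n := by
        have : (0:ℝ) ≤ (k:ℝ) := Nat.cast_nonneg k
        simp [hn]; linarith
      have hn0 : (0:ℝ) < n := by linarith
      have hfac : 0 ≤ 1 - c / n := by
        rw [sub_nonneg, div_le_one hn0]; linarith
      have hA : 0 ≤ m ^ 2 * M 0 := mul_nonneg (by positivity) (hMnn 0)
      have step := step12 c n (m ^ 2 * M 0) p2 p3 p5 hc hcn hA hp2 hp3 hp5
      have h1 : M (k + 1) ≤ (1 - c / n) * (m ^ 2 * M 0 / n ^ 2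
          + 4 * p2 / ((c - 1) * n) + 4 * p3 / ((c - 2) * n ^ 2)
          + 4 * p5 / ((c - 4) * n ^ 4)) + p2 / n ^ 2 + p3 / n ^ 3 + p5 / n ^ 5 := by
        have := hrec k
        have hmul := mul_le_mul_of_nonneg_left ih hfac
        calc M (k + 1) ≤ (1 - c / n) * M k + p2 / n ^ 2 + p3 / n ^ 3 + p5 / n ^ 5 := this
          _ ≤ _ := by linarith
      have hcast : ((k + 1 : ℕ) : ℝ) + m = n + 1 := by push_cast [hn]; ring
      rw [hcast]
      calc M (k + 1) ≤ _ := h1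
        _ ≤ _ := step
  intro k _
  exact key k
end

section
/- Let $q_0 \in (0,1)$, $m \ge 1$ a real number, $i \in \{2,3,4\}$, and $q_i \ge 0$. Define $A_i(k) = \sum_{t=0}^{k-1} q_0^{k-1-t} \frac{q_i}{(m+t)^i}$. If $(1 - \frac{1}{m+1})^i - q_0 > 0$, then for all $k \ge 0$, $A_i(k) \le \frac{q_i}{(k+m)^i \left[(1-\frac{1}{m+1})^i - q_0\right]}$. -/
/-- bound on the geometric-decay convolution sum
`A_i(k) = ∑_{t=0}^{k-1} q₀^{k-1-t} qᵢ/(m+t)^i`. -/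
theorem stmt_13 (q0 m qi : ℝ) (i : ℕ) (hq0 : 0 < q0) (hq1 : q0 < 1)
    (hm : 1 ≤ m) (hi : i = 2 ∨ i = 3 ∨ i = 4) (hqi : 0 ≤ qi)
    (hpos : 0 < (1 - 1 / (m + 1)) ^ i - q0) :
    ∀ k : ℕ, (∑ t ∈ Finset.range k, q0 ^ (k - 1 - t) * (qi / (m + (t : ℝ)) ^ i)) ≤
      qi / (((k : ℝ) + m) ^ i * ((1 - 1 / (m + 1)) ^ i - q0)) := by
  have hm0 : (0:ℝ) < m := lt_of_lt_of_le one_pos hm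
  have hm1 : (0:ℝ) < m + 1 := by linarith
  set D := (1 - 1 / (m + 1)) ^ i - q0 with hD
  have hsub : (1 - 1 / (m + 1)) = m / (m + 1) := by field_simp; ring
  have hC : q0 + D = (m / (m + 1)) ^ i := by rw [hD, hsub]; ring
  intro k
  induction k with
  | zero => simp; positivity
  | succ k ih =>
    have hrec : (∑ t ∈ Finset.range (k+1), q0 ^ (k + 1 - 1 - t) * (qi / (m + (t:ℝ)) ^ i))
        = q0 * (∑ t ∈ Finset.range k, q0 ^ (k - 1 - t) * (qi / (m + (t:ℝ)) ^ i))
          + qi / (m + (k:ℝ)) ^ i := by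
      rw [Finset.sum_range_succ, Finset.mul_sum]
      congr 1
      · apply Finset.sum_congr rfl
        intro t ht
        have ht' : t < k := Finset.mem_range.mp ht
        have : k + 1 - 1 - t = (k - 1 - t) + 1 := by omega
        rw [this, pow_succ]; ring
      · simp
    rw [hrec]
    push_cast
    have hX : (0:ℝ) < ((k:ℝ) + m) ^ i := by positivity
    have hY : (0:ℝ) < ((k:ℝ) + 1 + m) ^ i := by positivity
    have hCY : (m / (m + 1)) ^ i * ((k:ℝ) + 1 + m) ^ i ≤ ((k:ℝ) + m) ^ i := by
      rw [← mul_pow]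
      apply pow_le_pow_left₀ (by positivity)
      rw [div_mul_eq_mul_div, div_le_iff₀ hm1]
      nlinarith [(Nat.cast_nonneg k : (0:ℝ) ≤ k)]
    have key : q0 * (qi / (((k:ℝ) + m) ^ i * D)) + qi / (m + (k:ℝ)) ^ i
        ≤ qi / ((((k:ℝ) + 1) + m) ^ i * D) := by
      have hmk : m + (k:ℝ) = (k:ℝ) + m := by ring
      rw [hmk]
      have h1 : q0 * (qi / (((k:ℝ) + m) ^ i * D)) + qi / ((k:ℝ) + m) ^ i
          = qi * (q0 + D) / (((k:ℝ) + m) ^ i * D) := by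
        field_simp
      rw [h1, hC]
      have h2 : (((k:ℝ) + 1) + m) = ((k:ℝ) + 1 + m) := by ring
      rw [h2, div_le_div_iff₀ (by positivity) (by positivity)]
      nlinarith [mul_le_mul_of_nonneg_left hCY (mul_nonneg hqi hpos.le)]
    refine le_trans (add_le_add_left (mul_le_mul_of_nonneg_left ih hq0.le) _) key
end

section
/- Let $W$ be an $n \times n$ symmetric stochastic matrix with smallest eigenvalue $\lambda_n > 0$, let $V = (I_n-W)^{1/2}$, and let $B = \begin{pmatrix} W & -V \\ VW & W \end{pmatrix} \in \mathbb{R}^{2n\times 2n}$. Then $B$ is diagonalizable over $\mathbb{C}$; its eigenvalue $1$ has multiplicity $2$; every other eigenvalue has modulus $\sqrt{|\lambda_j(W)|} \le \sqrt{\lambda_2}$ where $\lambda_2$ is the second largest eigenvalue of $W$; and the spectral radius of $B$ equals $1$. -/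
open Matrix Polynomial

section helpers

variable {m R : Type*} [Fintype m] [DecidableEq m] [CommRing R]

lemma my_det_conj (P X P' : Matrix m m R) (h1 : P * P' = 1) :
    (P * X * P').det = X.det := by
  rw [Matrix.det_mul, Matrix.det_mul, mul_right_comm, ← Matrix.det_mul, h1, Matrix.det_one,
    one_mul]

lemma my_charmatrix_conj (P A P' : Matrix m m R) (h1 : P * P' = 1) :
    charmatrix (P * A * P') = (P.map C) * charmatrix A * (P'.map C) := by
  have hPP' : (P.map (C : R →+* R[X])) * (P'.map (C : R →+* R[X])) = 1 := by
    rw [← Matrix.map_mul, h1, Matrix.map_one _ (map_zero _) (map_one _)]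
  unfold charmatrix
  rw [Matrix.mul_sub, Matrix.sub_mul]
  congr 1
  · rw [mul_assoc, scalar_commute (X : R[X]) (fun r' => Commute.all _ _), ← mul_assoc, hPP',
      one_mul]
  · simp only [RingHom.mapMatrix_apply, ← Matrix.map_mul]

lemma my_charpoly_conj (P A P' : Matrix m m R) (h1 : P * P' = 1) :
    Matrix.charpoly (P * A * P') = Matrix.charpoly A := by
  have hPP' : (P.map (C : R →+* R[X])) * (P'.map (C : R →+* R[X])) = 1 := by
    rw [← Matrix.map_mul, h1, Matrix.map_one _ (map_zero _) (map_one _)]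
  unfold Matrix.charpoly
  rw [my_charmatrix_conj P A P' h1, my_det_conj _ _ _ hPP']

lemma my_isUnit_conj {K : Type*} [Field K] (P X P' : Matrix m m K)
    (h1 : P * P' = 1) (h2 : P' * P = 1) :
    IsUnit (P * X * P') ↔ IsUnit X := by
  rw [Matrix.isUnit_iff_isUnit_det, Matrix.isUnit_iff_isUnit_det X, my_det_conj P X P' h1]

lemma my_spectrum_conj {K : Type*} [Field K] (P A P' : Matrix m m K)
    (h1 : P * P' = 1) (h2 : P' * P = 1) :
    spectrum K (P * A * P') = spectrum K A := by
  ext z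
  simp only [spectrum.mem_iff]
  have key : (algebraMap K (Matrix m m K)) z - P * A * P'
      = P * ((algebraMap K (Matrix m m K)) z - A) * P' := by
    rw [Matrix.mul_sub, Matrix.sub_mul]
    congr 1
    rw [Algebra.algebraMap_eq_smul_one, mul_assoc, Matrix.smul_mul, one_mul,
      Matrix.mul_smul, h1]
  rw [key, my_isUnit_conj _ _ _ h1 h2]

lemma my_posdef_spectrum {n : ℕ} {M : Matrix (Fin n) (Fin n) ℝ} (hM : M.PosDef) :
    ∀ l ∈ spectrum ℝ M, 0 < l := by
  intro l hl
  rw [← AlgEquiv.spectrum_eq (Matrix.toLinAlgEquiv' (R := ℝ) (n := Fin n)),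
    ← Module.End.hasEigenvalue_iff_mem_spectrum] at hl
  obtain ⟨v, hv⟩ := hl.exists_hasEigenvector
  have hv0 : v ≠ 0 := hv.right
  have hMv : M *ᵥ v = l • v := by
    have := hv.apply_eq_smul
    simpa [Matrix.toLinAlgEquiv'_apply, Matrix.toLin'_apply] using this
  have hpos := hM.dotProduct_mulVec_pos hv0
  rw [hMv] at hpos
  have hdot : (0:ℝ) < dotProduct v v := dotProduct_star_self_pos_iff.mpr hv0
  simp only [star_trivial, dotProduct_smul, smul_eq_mul] at hpos
  nlinarith

end helpers

section helpers2

variable {m R : Type*} [Fintype m] [DecidableEq m] [CommRing R]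

lemma my_charpoly_diagonal (d : m → R) :
    Matrix.charpoly (Matrix.diagonal d) = ∏ i, (X - C (d i)) := by
  unfold Matrix.charpoly
  have h : charmatrix (Matrix.diagonal d) = Matrix.diagonal (fun i => (X : R[X]) - C (d i)) := by
    ext i j
    by_cases h : i = j
    · subst h; simp [charmatrix_apply, Matrix.diagonal_apply_eq]
    · simp [charmatrix_apply, Matrix.diagonal_apply_ne _ h, h]
  rw [h, Matrix.det_diagonal]

lemma my_rootMult_prod {K : Type*} [Field K] [DecidableEq K] (f : m → K) (a : K) :
    rootMultiplicity a (∏ i, (X - C (f i)))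
      = Multiset.count a (Finset.univ.val.map f) := by
  rw [← Polynomial.count_roots]
  have h : (∏ i, (X - C (f i)))
      = ((Finset.univ.val.map f).map (fun b => (X : K[X]) - C b)).prod := by
    rw [Multiset.map_map]
    rfl
  rw [h, Polynomial.roots_multiset_prod_X_sub_C]

lemma my_count_sum_elim {α β γ : Type*} [Fintype α] [Fintype β] [DecidableEq γ]
    (f : α → γ) (g : β → γ) (a : γ) :
    Multiset.count a ((Finset.univ : Finset (α ⊕ β)).val.map (Sum.elim f g))
      = Multiset.count a (Finset.univ.val.map f)
        + Multiset.count a (Finset.univ.val.map g) := by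
  have h : (Finset.univ : Finset (α ⊕ β)).val
      = (Finset.univ.val.map Sum.inl) + (Finset.univ.val.map Sum.inr) := rfl
  rw [h, Multiset.map_add, Multiset.count_add, Multiset.map_map, Multiset.map_map]
  rfl

lemma my_count_congr {α γ δ : Type*} [Fintype α] [DecidableEq γ] [DecidableEq δ]
    (f : α → γ) (g : α → δ) (a : γ) (b : δ) (h : ∀ i, f i = a ↔ g i = b) :
    Multiset.count a (Finset.univ.val.map f) = Multiset.count b (Finset.univ.val.map g) := by
  rw [Multiset.count_map, Multiset.count_map]
  congr 1
  apply Multiset.filter_congr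
  intro x _
  rw [eq_comm, h x, eq_comm]

end helpers2
/-- for `W` symmetric stochastic with positive eigenvalues, simple
eigenvalue `1`, second largest eigenvalue `λ₂ < 1`, and `V = (I-W)^{1/2}`, the block
matrix `B = [[W, -V], [VW, W]]` is diagonalizable over `ℂ`, its eigenvalue `1` has
multiplicity `2`, every other eigenvalue has modulus `√|λⱼ(W)| ≤ √λ₂`, and the spectral
radius of `B` equals `1`. -/
theorem stmt_19 {n : ℕ} (W V : Matrix (Fin n) (Fin n) ℝ) (lam2 : ℝ)
    (hWsymm : W.IsSymm) (hWnonneg : ∀ i j, 0 ≤ W i j)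
    (hWrow : ∀ i, ∑ j, W i j = 1)
    (hWpos : W.PosDef)
    (hsimple : Polynomial.rootMultiplicity 1 (Matrix.charpoly W) = 1)
    (hsec : ∀ l ∈ spectrum ℝ W, l = 1 ∨ l ≤ lam2)
    (hlam2nn : 0 ≤ lam2) (hlam2lt : lam2 < 1)
    (hVpsd : V.PosSemidef) (hV2 : V * V = 1 - W) :
    let B : Matrix (Fin n ⊕ Fin n) (Fin n ⊕ Fin n) ℝ := Matrix.fromBlocks W (-V) (V * W) W
    let Bc : Matrix (Fin n ⊕ Fin n) (Fin n ⊕ Fin n) ℂ := B.map (fun a => (a : ℂ))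
    (∃ P D : Matrix (Fin n ⊕ Fin n) (Fin n ⊕ Fin n) ℂ,
        IsUnit P.det ∧ D.IsDiag ∧ Bc = P * D * P⁻¹) ∧
    Polynomial.rootMultiplicity 1 (Matrix.charpoly Bc) = 2 ∧
    (∀ μ ∈ spectrum ℂ Bc, μ ≠ 1 →
        (∃ l ∈ spectrum ℝ W, ‖μ‖ = Real.sqrt |l|) ∧
        ‖μ‖ ≤ Real.sqrt lam2) ∧
    (1 : ℂ) ∈ spectrum ℂ Bc ∧ (∀ μ ∈ spectrum ℂ Bc, ‖μ‖ ≤ 1) := by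
  intro B Bc
  classical
  have hV : V.IsHermitian := hVpsd.1
  set σ : Fin n → ℝ := hV.eigenvalues with hσdef
  have hσnn : ∀ i, 0 ≤ σ i := hVpsd.eigenvalues_nonneg
  set Q : Matrix (Fin n) (Fin n) ℝ := ↑(hV.eigenvectorUnitary) with hQdef
  have hQ1 : Q * star Q = 1 := (Matrix.mem_unitaryGroup_iff).mp (hV.eigenvectorUnitary).2
  have hQ2 : star Q * Q = 1 := (Matrix.mem_unitaryGroup_iff').mp (hV.eigenvectorUnitary).2
  have hVspec : V = Q * Matrix.diagonal σ * star Q := by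
    have := hV.spectral_theorem
    rwa [RCLike.ofReal_real_eq_id, Function.id_comp] at this
  set lam : Fin n → ℝ := fun i => 1 - σ i ^ 2 with hlamdef
  have hWeq : W = 1 - V * V := by rw [hV2]; abel
  have hVQ : V * Q = Q * Matrix.diagonal σ := by
    rw [hVspec, Matrix.mul_assoc, hQ2, Matrix.mul_one]
  have hWQ : W * Q = Q * Matrix.diagonal lam := by
    have : W * Q = Q - V * (V * Q) := by
      rw [hWeq, Matrix.sub_mul, Matrix.one_mul, Matrix.mul_assoc]
    have hdl : Matrix.diagonal lam = 1 - Matrix.diagonal (fun i => σ i * σ i) := by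
      rw [← Matrix.diagonal_one, ← Matrix.diagonal_sub]
      congr 1
      funext i
      simp [hlamdef, sq]
    rw [this, hVQ, ← Matrix.mul_assoc, hVQ, Matrix.mul_assoc, Matrix.diagonal_mul_diagonal,
      hdl, Matrix.mul_sub, Matrix.mul_one]
  have hWfact : W = Q * Matrix.diagonal lam * star Q := by
    calc W = W * (Q * star Q) := by rw [hQ1, Matrix.mul_one]
    _ = (W * Q) * star Q := by rw [Matrix.mul_assoc]
    _ = Q * Matrix.diagonal lam * star Q := by rw [hWQ]
  -- spectrum of W
  have hspecW : spectrum ℝ W = Set.range lam := by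
    rw [hWfact, my_spectrum_conj _ _ _ hQ1 hQ2, spectrum_diagonal]
  have hlam_mem : ∀ i, lam i ∈ spectrum ℝ W := fun i => hspecW ▸ ⟨i, rfl⟩
  have hlam_pos : ∀ i, 0 < lam i := fun i => my_posdef_spectrum hWpos _ (hlam_mem i)
  have hlam_le1 : ∀ i, lam i ≤ 1 := by
    intro i
    have := sq_nonneg (σ i)
    simp only [hlamdef]
    linarith
  have hσ0 : ∀ i, lam i = 1 → σ i = 0 := by
    intro i hi
    have h2 : σ i ^ 2 = 0 := by simp only [hlamdef] at hi; linarith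
    exact pow_eq_zero_iff (by norm_num) |>.mp h2
  -- charpoly of W
  have hcharW : Multiset.count (1:ℝ) (Finset.univ.val.map lam) = 1 := by
    rw [← my_rootMult_prod lam 1, ← my_charpoly_diagonal, ← my_charpoly_conj Q _ (star Q) hQ1,
      ← hWfact]
    exact hsimple
  -- complexification
  set f : ℝ →+* ℂ := Complex.ofRealHom with hfdef
  have hmap_mul : ∀ (X Y : Matrix (Fin n) (Fin n) ℝ), (X * Y).map f = X.map f * Y.map f :=
    fun X Y => Matrix.map_mul
  have hmap_one : (1 : Matrix (Fin n) (Fin n) ℝ).map f = 1 :=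
    Matrix.map_one f (map_zero f) (map_one f)
  set Qc : Matrix (Fin n) (Fin n) ℂ := Q.map f with hQcdef
  set Qc' : Matrix (Fin n) (Fin n) ℂ := (star Q).map f with hQc'def
  have hQc1 : Qc * Qc' = 1 := by rw [hQcdef, hQc'def, ← hmap_mul, hQ1, hmap_one]
  have hQc2 : Qc' * Qc = 1 := by rw [hQcdef, hQc'def, ← hmap_mul, hQ2, hmap_one]
  set lc : Fin n → ℂ := fun i => (lam i : ℂ) with hlc
  set sc : Fin n → ℂ := fun i => (σ i : ℂ) with hsc
  set tc : Fin n → ℂ := fun i => ((Real.sqrt (lam i) : ℝ) : ℂ) with htc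
  have htc2 : ∀ i, tc i * tc i = lc i := by
    intro i
    rw [htc, hlc, ← Complex.ofReal_mul, Real.mul_self_sqrt (hlam_pos i).le]
  have htcne : ∀ i, tc i ≠ 0 := by
    intro i
    rw [htc]
    simp only [ne_eq, Complex.ofReal_eq_zero]
    exact (Real.sqrt_pos.mpr (hlam_pos i)).ne'
  have hdiag_map : ∀ (d : Fin n → ℝ),
      (Matrix.diagonal d).map f = Matrix.diagonal (fun i => (d i : ℂ)) :=
    fun d => Matrix.diagonal_map (map_zero f)
  have hWc : W.map f = Qc * Matrix.diagonal lc * Qc' := by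
    rw [hWfact, hmap_mul, hmap_mul, hdiag_map]
  have hVc : V.map f = Qc * Matrix.diagonal sc * Qc' := by
    rw [hVspec, hmap_mul, hmap_mul, hdiag_map]
  have hnVc : (-V).map f = Qc * Matrix.diagonal (fun i => -sc i) * Qc' := by
    have h1 : (-V).map f = -(V.map f) := by
      ext i j
      simp [hfdef]
    rw [h1, hVc, ← Matrix.diagonal_neg]
    simp only [Matrix.mul_neg, Matrix.neg_mul]
  have hVWc : (V * W).map f = Qc * Matrix.diagonal (fun i => sc i * lc i) * Qc' := by
    rw [hmap_mul, hWc, hVc]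
    calc (Qc * Matrix.diagonal sc * Qc') * (Qc * Matrix.diagonal lc * Qc')
        = Qc * Matrix.diagonal sc * ((Qc' * Qc) * (Matrix.diagonal lc * Qc')) := by
          simp only [Matrix.mul_assoc]
      _ = Qc * (Matrix.diagonal sc * Matrix.diagonal lc) * Qc' := by
          rw [hQc2, Matrix.one_mul]
          simp only [Matrix.mul_assoc]
      _ = _ := by rw [Matrix.diagonal_mul_diagonal]
  -- block matrices
  set U : Matrix (Fin n ⊕ Fin n) (Fin n ⊕ Fin n) ℂ := Matrix.fromBlocks Qc 0 0 Qc with hU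
  set U' : Matrix (Fin n ⊕ Fin n) (Fin n ⊕ Fin n) ℂ := Matrix.fromBlocks Qc' 0 0 Qc' with hU'
  have hU1 : U * U' = 1 := by
    rw [hU, hU', Matrix.fromBlocks_multiply]
    simp only [Matrix.mul_zero, Matrix.zero_mul, add_zero, zero_add, hQc1]
    exact Matrix.fromBlocks_one
  have hU2 : U' * U = 1 := by
    rw [hU, hU', Matrix.fromBlocks_multiply]
    simp only [Matrix.mul_zero, Matrix.zero_mul, add_zero, zero_add, hQc2]
    exact Matrix.fromBlocks_one
  set M0 : Matrix (Fin n ⊕ Fin n) (Fin n ⊕ Fin n) ℂ :=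
    Matrix.fromBlocks (Matrix.diagonal lc) (Matrix.diagonal (fun i => -sc i))
      (Matrix.diagonal (fun i => sc i * lc i)) (Matrix.diagonal lc) with hM0
  have hBcU : Bc = U * M0 * U' := by
    have hBc0 : Bc = Matrix.fromBlocks (W.map f) ((-V).map f) ((V * W).map f) (W.map f) := by
      show B.map _ = _
      rw [show B = Matrix.fromBlocks W (-V) (V * W) W from rfl, Matrix.fromBlocks_map]
      rfl
    rw [hBc0, hWc, hnVc, hVWc, hU, hU', hM0, Matrix.fromBlocks_multiply,
      Matrix.fromBlocks_multiply]
    simp only [Matrix.mul_zero, Matrix.zero_mul, add_zero, zero_add]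
  set mtc : Fin n → ℂ := fun i => -Complex.I * tc i with hmtc
  set ptc : Fin n → ℂ := fun i => Complex.I * tc i with hptc
  set dp : Fin n → ℂ := fun i => lc i + sc i * tc i * Complex.I with hdp
  set dm : Fin n → ℂ := fun i => lc i - sc i * tc i * Complex.I with hdm
  set P0 : Matrix (Fin n ⊕ Fin n) (Fin n ⊕ Fin n) ℂ :=
    Matrix.fromBlocks (Matrix.diagonal (fun _ => (1:ℂ))) (Matrix.diagonal (fun _ => (1:ℂ)))
      (Matrix.diagonal mtc) (Matrix.diagonal ptc) with hP0
  set P0' : Matrix (Fin n ⊕ Fin n) (Fin n ⊕ Fin n) ℂ :=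
    Matrix.fromBlocks (Matrix.diagonal (fun _ => (1/2:ℂ)))
      (Matrix.diagonal (fun i => Complex.I / (2 * tc i)))
      (Matrix.diagonal (fun _ => (1/2:ℂ)))
      (Matrix.diagonal (fun i => -Complex.I / (2 * tc i))) with hP0'
  set Dmu : Matrix (Fin n ⊕ Fin n) (Fin n ⊕ Fin n) ℂ :=
    Matrix.diagonal (Sum.elim dp dm) with hDmu
  have hcore1 : M0 * P0 = P0 * Dmu := by
    rw [hM0, hP0, hDmu, ← Matrix.fromBlocks_diagonal, Matrix.fromBlocks_multiply,
      Matrix.fromBlocks_multiply]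
    simp only [Matrix.diagonal_mul_diagonal, Matrix.mul_zero, Matrix.zero_mul, add_zero,
      zero_add, Matrix.diagonal_zero, Matrix.diagonal_add]
    rw [Matrix.fromBlocks_inj]
    refine ⟨?_, ?_, ?_, ?_⟩ <;>
    · refine congrArg Matrix.diagonal (funext fun i => ?_)
      simp only [hdp, hdm, hmtc, hptc]
      first
        | ring1
        | linear_combination (-sc i) * htc2 i + (sc i * tc i * tc i) * Complex.I_sq
  have hcore2 : P0 * P0' = 1 := by
    rw [hP0, hP0', ← Matrix.fromBlocks_one, Matrix.fromBlocks_multiply]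
    simp only [Matrix.diagonal_mul_diagonal, Matrix.diagonal_add]
    rw [Matrix.fromBlocks_inj]
    refine ⟨?_, ?_, ?_, ?_⟩
    · rw [← Matrix.diagonal_one]
      refine congrArg Matrix.diagonal (funext fun i => ?_)
      norm_num
    · rw [← Matrix.diagonal_zero]
      refine congrArg Matrix.diagonal (funext fun i => ?_)
      ring
    · rw [← Matrix.diagonal_zero]
      refine congrArg Matrix.diagonal (funext fun i => ?_)
      simp only [hmtc, hptc]
      ring
    · rw [← Matrix.diagonal_one]
      refine congrArg Matrix.diagonal (funext fun i => ?_)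
      simp only [hmtc, hptc]
      calc -Complex.I * tc i * (Complex.I / (2 * tc i)) + Complex.I * tc i * (-Complex.I / (2 * tc i))
          = (-Complex.I * Complex.I) * (tc i / tc i) := by ring
        _ = 1 := by rw [div_self (htcne i)]; simp [Complex.I_mul_I]
  set P : Matrix (Fin n ⊕ Fin n) (Fin n ⊕ Fin n) ℂ := U * P0 with hPdef
  set Pinv : Matrix (Fin n ⊕ Fin n) (Fin n ⊕ Fin n) ℂ := P0' * U' with hPinvdef
  have hPP : P * Pinv = 1 := by
    rw [hPdef, hPinvdef]
    calc U * P0 * (P0' * U') = U * (P0 * P0') * U' := by simp only [Matrix.mul_assoc]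
      _ = U * U' := by rw [hcore2, Matrix.mul_one]
      _ = 1 := hU1
  have hPP2 : Pinv * P = 1 := mul_eq_one_comm.mp hPP
  have hdetP : IsUnit P.det := (Matrix.isUnit_iff_isUnit_det P).mp ⟨⟨P, Pinv, hPP, hPP2⟩, rfl⟩
  have hPinv_eq : P⁻¹ = Pinv := Matrix.inv_eq_right_inv hPP
  have hsim : Bc * P = P * Dmu := by
    rw [hBcU, hPdef]
    calc U * M0 * U' * (U * P0) = U * (M0 * ((U' * U) * P0)) := by simp only [Matrix.mul_assoc]
      _ = U * (M0 * P0) := by rw [hU2, Matrix.one_mul]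
      _ = U * (P0 * Dmu) := by rw [hcore1]
      _ = U * P0 * Dmu := by simp only [Matrix.mul_assoc]
  have hBD : Bc = P * Dmu * Pinv := by
    calc Bc = Bc * (P * Pinv) := by rw [hPP, Matrix.mul_one]
      _ = (Bc * P) * Pinv := by simp only [Matrix.mul_assoc]
      _ = P * Dmu * Pinv := by rw [hsim]
  -- spectrum of Bc
  have hspecBc : spectrum ℂ Bc = Set.range (Sum.elim dp dm) := by
    rw [hBD, my_spectrum_conj _ _ _ hPP hPP2, hDmu, spectrum_diagonal]
  -- key pointwise facts
  have hd : ∀ i, dp i = 1 ↔ lam i = 1 := by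
    intro i
    constructor
    · intro h
      have hre := congrArg Complex.re h
      simp only [hdp, hlc, hsc, htc, Complex.add_re, Complex.ofReal_re, Complex.mul_re,
        Complex.mul_im, Complex.I_re, Complex.I_im, Complex.ofReal_im, Complex.one_re] at hre
      linarith
    · intro h
      have h0 := hσ0 i h
      simp [hdp, hlc, hsc, h, h0]
  have hd' : ∀ i, dm i = 1 ↔ lam i = 1 := by
    intro i
    constructor
    · intro h
      have hre := congrArg Complex.re h
      simp only [hdm, hlc, hsc, htc, Complex.sub_re, Complex.add_re, Complex.ofReal_re,
        Complex.mul_re, Complex.mul_im, Complex.I_re, Complex.I_im, Complex.ofReal_im,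
        Complex.one_re] at hre
      linarith
    · intro h
      have h0 := hσ0 i h
      simp [hdm, hlc, hsc, h, h0]
  have hsq : ∀ i, lam i ^ 2 + (σ i * Real.sqrt (lam i)) ^ 2 = lam i := by
    intro i
    have h1 : Real.sqrt (lam i) ^ 2 = lam i := Real.sq_sqrt (hlam_pos i).le
    have h2 : σ i ^ 2 = 1 - lam i := by
      simp only [hlamdef]
      ring
    rw [mul_pow, h1, h2]
    ring
  have habsp : ∀ i, ‖dp i‖ = Real.sqrt (lam i) := by
    intro i
    have he : dp i = (lam i : ℂ) + ((σ i * Real.sqrt (lam i) : ℝ) : ℂ) * Complex.I := by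
      simp only [hdp, hlc, hsc, htc]
      push_cast
      ring
    rw [he, Complex.norm_add_mul_I, hsq i]
  have habsm : ∀ i, ‖dm i‖ = Real.sqrt (lam i) := by
    intro i
    have he : dm i = (lam i : ℂ) + ((-(σ i * Real.sqrt (lam i)) : ℝ) : ℂ) * Complex.I := by
      simp only [hdm, hlc, hsc, htc]
      push_cast
      ring
    rw [he, Complex.norm_add_mul_I, neg_sq, hsq i]
  have habs : ∀ x, ‖Sum.elim dp dm x‖ = Real.sqrt (lam (Sum.elim id id x)) := by
    intro x
    cases x with
    | inl i => simpa using habsp i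
    | inr i => simpa using habsm i
  refine ⟨⟨P, Dmu, hdetP, by rw [hDmu]; exact Matrix.isDiag_diagonal _, by rw [hPinv_eq]; exact hBD⟩,
    ?_, ?_, ?_, ?_⟩
  · -- multiplicity 2
    rw [hBD, my_charpoly_conj _ _ _ hPP, hDmu, my_charpoly_diagonal, my_rootMult_prod,
      my_count_sum_elim]
    have c1 : Multiset.count (1:ℂ) (Finset.univ.val.map dp) = 1 := by
      rw [my_count_congr dp lam 1 1 (fun i => hd i)]
      exact hcharW
    have c2 : Multiset.count (1:ℂ) (Finset.univ.val.map dm) = 1 := by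
      rw [my_count_congr dm lam 1 1 (fun i => hd' i)]
      exact hcharW
    rw [c1, c2]
  · -- other eigenvalues
    intro μ hμ hμ1
    rw [hspecBc] at hμ
    obtain ⟨x, rfl⟩ := hμ
    have hlam_ne : lam (Sum.elim id id x) ≠ 1 := by
      intro h1
      apply hμ1
      cases x with
      | inl i => exact (hd i).mpr h1
      | inr i => exact (hd' i).mpr h1
    have hle : lam (Sum.elim id id x) ≤ lam2 := by
      rcases hsec _ (hlam_mem (Sum.elim id id x)) with h | h
      · exact absurd h hlam_ne
      · exact h
    constructor
    · refine ⟨lam (Sum.elim id id x), hlam_mem _, ?_⟩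
      rw [habs x, abs_of_pos (hlam_pos _)]
    · rw [habs x]
      exact Real.sqrt_le_sqrt hle
  · -- 1 is an eigenvalue
    have hex : ∃ i, lam i = 1 := by
      have hpos : 0 < Multiset.count (1:ℝ) (Finset.univ.val.map lam) := by
        rw [hcharW]; norm_num
      rw [Multiset.count_pos] at hpos
      obtain ⟨i, _, hi⟩ := Multiset.mem_map.mp hpos
      exact ⟨i, hi⟩
    obtain ⟨i, hi⟩ := hex
    rw [hspecBc]
    exact ⟨Sum.inl i, (hd i).mpr hi⟩
  · -- spectral radius
    intro μ hμ
    rw [hspecBc] at hμ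
    obtain ⟨x, rfl⟩ := hμ
    rw [habs x]
    calc Real.sqrt (lam (Sum.elim id id x)) ≤ Real.sqrt 1 := Real.sqrt_le_sqrt (hlam_le1 _)
      _ = 1 := Real.sqrt_one
end
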